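/- For all matrices G, R, L ∈ ℝ^{2×2} with L ≠ 0, one has ‖G‖² + ‖R − 2 G L‖² ≥ min{ 1/4 , 1/(16‖L‖²) } · ( ‖G‖² + ‖R‖² ). (Quantitative pointwise form of the key estimate in Lemma 4.2: the change-of-metric and change-of-curvature measures control the Koiter strain measures.) -/
import Mathlib


open Matrix

/-- Squared Frobenius norm of a real matrix: ‖X‖² = tr(X Xᵀ). -/
noncomputable def frobSq {m n : ℕ} (X : Matrix (Fin m) (Fin n) ℝ) : ℝ :=
  Matrix.trace (X * Xᵀ)

lemma frobSq_eq (X : Matrix (Fin 2) (Fin 2) ℝ) :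
    frobSq X = X 0 0 ^ 2 + X 0 1 ^ 2 + X 1 0 ^ 2 + X 1 1 ^ 2 := by
  simp [frobSq, Matrix.trace, Matrix.mul_apply, Fin.sum_univ_two, Matrix.transpose_apply]
  ring

lemma frobSq_nonneg (X : Matrix (Fin 2) (Fin 2) ℝ) : 0 ≤ frobSq X := by
  rw [frobSq_eq]; positivity

lemma frobSq_pos (X : Matrix (Fin 2) (Fin 2) ℝ) (h : X ≠ 0) : 0 < frobSq X := by
  rcases (frobSq_nonneg X).lt_or_eq with h' | h'
  · exact h'
  · exfalso; apply h
    rw [frobSq_eq] at h'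
    have h00 : X 0 0 = 0 := by nlinarith [sq_nonneg (X 0 1), sq_nonneg (X 1 0), sq_nonneg (X 1 1), sq_nonneg (X 0 0)]
    have h01 : X 0 1 = 0 := by nlinarith [sq_nonneg (X 0 0), sq_nonneg (X 1 0), sq_nonneg (X 1 1), sq_nonneg (X 0 1)]
    have h10 : X 1 0 = 0 := by nlinarith [sq_nonneg (X 0 0), sq_nonneg (X 0 1), sq_nonneg (X 1 1), sq_nonneg (X 1 0)]
    have h11 : X 1 1 = 0 := by nlinarith [sq_nonneg (X 0 0), sq_nonneg (X 0 1), sq_nonneg (X 1 0), sq_nonneg (X 1 1)]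
    ext i j
    fin_cases i <;> fin_cases j <;> simp [h00, h01, h10, h11]

lemma frobSq_mul_le (G L : Matrix (Fin 2) (Fin 2) ℝ) :
    frobSq (G * L) ≤ frobSq G * frobSq L := by
  rw [frobSq_eq, frobSq_eq, frobSq_eq]
  simp only [Matrix.mul_apply, Fin.sum_univ_two]
  nlinarith [sq_nonneg (G 0 0 * L 1 0 - G 0 1 * L 0 0), sq_nonneg (G 0 0 * L 1 1 - G 0 1 * L 0 1),
    sq_nonneg (G 1 0 * L 1 0 - G 1 1 * L 0 0), sq_nonneg (G 1 0 * L 1 1 - G 1 1 * L 0 1)]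

lemma frobSq_R_le (R M : Matrix (Fin 2) (Fin 2) ℝ) :
    frobSq R ≤ 2 * frobSq (R - (2 : ℝ) • M) + 8 * frobSq M := by
  rw [frobSq_eq, frobSq_eq, frobSq_eq]
  simp only [Matrix.sub_apply, Matrix.smul_apply, smul_eq_mul]
  nlinarith [sq_nonneg (R 0 0 - 4 * M 0 0), sq_nonneg (R 0 1 - 4 * M 0 1),
    sq_nonneg (R 1 0 - 4 * M 1 0), sq_nonneg (R 1 1 - 4 * M 1 1)]

/-- Quantitative pointwise form of the key estimate in Lemma 4.2:
for all `G R L ∈ ℝ^{2×2}` with `L ≠ 0`,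
`‖G‖² + ‖R − 2GL‖² ≥ min{1/4, 1/(16‖L‖²)}·(‖G‖² + ‖R‖²)`. -/
theorem koiter_strain_control (G R L : Matrix (Fin 2) (Fin 2) ℝ) (hL : L ≠ 0) :
    frobSq G + frobSq (R - (2 : ℝ) • (G * L)) ≥
      min (1 / 4 : ℝ) (1 / (16 * frobSq L)) * (frobSq G + frobSq R) := by
  set A := frobSq G with hA
  set B := frobSq (R - (2 : ℝ) • (G * L)) with hB
  set ℓ := frobSq L with hℓ
  have hℓpos : 0 < ℓ := frobSq_pos L hL
  have hApos : 0 ≤ A := frobSq_nonneg G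
  have hBpos : 0 ≤ B := frobSq_nonneg _
  have hRpos : 0 ≤ frobSq R := frobSq_nonneg R
  have hGL : frobSq (G * L) ≤ A * ℓ := frobSq_mul_le G L
  have hGLnn : 0 ≤ frobSq (G * L) := frobSq_nonneg _
  have hR : frobSq R ≤ 2 * B + 8 * (A * ℓ) := by
    have := frobSq_R_le R (G * L)
    linarith
  set c := min (1 / 4 : ℝ) (1 / (16 * ℓ)) with hc
  have hc1 : c ≤ 1 / 4 := min_le_left _ _
  have hc2 : c ≤ 1 / (16 * ℓ) := min_le_right _ _
  have hcpos : 0 < c := lt_min (by norm_num) (by positivity)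
  have hcl : c * (16 * ℓ) ≤ 1 := (le_div_iff₀ (by positivity)).mp hc2
  have h1 : c * frobSq R ≤ c * (2 * B + 8 * (A * ℓ)) :=
    mul_le_mul_of_nonneg_left hR hcpos.le
  nlinarith [mul_le_mul_of_nonneg_right hc1 hBpos, mul_le_mul_of_nonneg_right hcl hApos,
    mul_le_mul_of_nonneg_right hc1 hApos]
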